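/- Let X be a finite T0 topological space that has path-shaped Hasse diagram, and let Y be a nonempty connected locally closed subset of X. Then the complement X \ Y has at most two connected components; that is, X \ Y can be written as the union of two (possibly empty) preconnected subsets. -/

import Mathlib

/-- The specialisation order of a topological space: `x ⪯ y` iff `x ∈ closure {y}`. -/
def specLE {X : Type*} [TopologicalSpace X] (x y : X) : Prop := x ∈ closure ({y} : Set X)

/-- Strict specialisation: `x ≺ y`. -/
def specLT {X : Type*} [TopologicalSpace X] (x y : X) : Prop := specLE x y ∧ x ≠ y

/-- The covering relation of the specialisation order: `x ⋖ y`. -/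
def specCov {X : Type*} [TopologicalSpace X] (x y : X) : Prop :=
  specLT x y ∧ ¬ ∃ z, specLT x z ∧ specLT z y

section Helpers

variable {X : Type*} [TopologicalSpace X]

lemma specLE_refl (x : X) : specLE x x := subset_closure rfl

lemma specLE_trans {x y z : X} (h1 : specLE x y) (h2 : specLE y z) : specLE x z :=
  (closure_minimal (Set.singleton_subset_iff.mpr h2) isClosed_closure) h1

lemma specLE_antisymm [T0Space X] {x y : X} (h1 : specLE x y) (h2 : specLE y x) : x = y :=
  ((specializes_iff_mem_closure.mpr h2).antisymm (specializes_iff_mem_closure.mpr h1)).eq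

/-- The specialisation partial order on a T0 space. -/
def sOrd (X : Type*) [TopologicalSpace X] [T0Space X] : PartialOrder X where
  le := specLE
  lt := specLT
  le_refl := specLE_refl
  le_trans _ _ _ := specLE_trans
  lt_iff_le_not_ge a b := by
    constructor
    · rintro ⟨h, ne⟩; exact ⟨h, fun h' => ne (specLE_antisymm h h')⟩
    · rintro ⟨h, h'⟩; exact ⟨h, fun e => h' (e ▸ specLE_refl a)⟩
  le_antisymm _ _ := specLE_antisymm

lemma spec_exists_minimal [T0Space X] [Finite X] (S : Set X) (h : S.Nonempty) :
    ∃ m ∈ S, ∀ z ∈ S, specLE z m → z = m := by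
  letI := sOrd X
  obtain ⟨m, hm, hmin⟩ := (S.toFinite.toFinset).exists_minimal
    ((S.toFinite.toFinset_nonempty).mpr h)
  refine ⟨m, (S.toFinite.mem_toFinset).mp hm, fun z hz hle => ?_⟩
  exact specLE_antisymm hle (hmin ((S.toFinite.mem_toFinset).mpr hz) hle)

lemma spec_exists_cov [T0Space X] [Finite X] {x y : X} (h : specLT x y) :
    ∃ z, specCov x z ∧ specLE z y := by
  obtain ⟨m, hm, hmin⟩ := spec_exists_minimal {z | specLT x z ∧ specLE z y}
    ⟨y, h, specLE_refl y⟩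
  refine ⟨m, ⟨hm.1, ?_⟩, hm.2⟩
  rintro ⟨w, hxw, hwm⟩
  exact hwm.2 (hmin w ⟨hxw, specLE_trans hwm.1 hm.2⟩ hwm.1)

lemma pre_insert {s : Set X} (hs : IsPreconnected s) {y : X} (hy : y ∈ s) (x : X)
    (h : specLE x y ∨ specLE y x) : IsPreconnected (insert x s) := by
  rcases h with h | h
  · refine hs.subset_closure (Set.subset_insert x s) ?_
    exact Set.insert_subset_iff.mpr
      ⟨closure_mono (Set.singleton_subset_iff.mpr hy) h, subset_closure⟩
  · have hxy : IsPreconnected ({x, y} : Set X) := by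
      refine (isPreconnected_singleton (x := x)).subset_closure ?_ ?_
      · exact Set.singleton_subset_iff.mpr (Set.mem_insert x {y})
      · rintro z (rfl | hz)
        · exact subset_closure rfl
        · rw [Set.mem_singleton_iff] at hz; subst hz; exact h
    have hyxy : y ∈ ({x, y} : Set X) := Set.mem_insert_iff.mpr (Or.inr rfl)
    have hu := hxy.union y hyxy hy hs
    have heq : ({x, y} : Set X) ∪ s = insert x s := by
      ext z
      simp only [Set.mem_union, Set.mem_insert_iff, Set.mem_singleton_iff]
      constructor
      · rintro ((rfl | rfl) | hz)
        · exact Or.inl rfl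
        · exact Or.inr hy
        · exact Or.inr hz
      · rintro (rfl | hz)
        · exact Or.inl (Or.inl rfl)
        · exact Or.inr hz
    rwa [heq] at hu

lemma mem_closure_fin [Finite X] {S : Set X} {x : X} (h : x ∈ closure S) :
    ∃ y ∈ S, specLE x y := by
  have hsub : closure S ⊆ ⋃ y ∈ S, closure {y} :=
    closure_minimal (fun z hz => Set.mem_biUnion hz (subset_closure rfl))
      (S.toFinite.isClosed_biUnion fun _ _ => isClosed_closure)
  obtain ⟨y, hy, hxy⟩ := Set.mem_iUnion₂.mp (hsub h)
  exact ⟨y, hy, hxy⟩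

lemma pass {n : ℕ} [T0Space X] [Finite X] (e : Fin n ≃ X)
    (he : ∀ i j : Fin n,
      (specCov (e i) (e j) ∨ specCov (e j) (e i)) ↔ (i.val + 1 = j.val ∨ j.val + 1 = i.val)) :
    ∀ m : ℕ, ∀ x y : X, Set.ncard {w | specLE x w ∧ specLE w y} ≤ m →
      specLE x y → ∀ k : Fin n,
      (((e.symm x).val < k.val ∧ k.val < (e.symm y).val) ∨
        ((e.symm y).val < k.val ∧ k.val < (e.symm x).val)) →
      ∃ z, specLE x z ∧ specLE z y ∧ e.symm z = k := by
  intro m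
  induction m with
  | zero =>
    intro x y hcard hxy k hk
    exfalso
    have hx : x ∈ {w | specLE x w ∧ specLE w y} := ⟨specLE_refl x, hxy⟩
    have hpos := (Set.ncard_pos (Set.toFinite _)).mpr ⟨x, hx⟩
    omega
  | succ m ih =>
    intro x y hcard hxy k hk
    have hne : x ≠ y := by
      rintro rfl
      rcases hk with ⟨h1, h2⟩ | ⟨h1, h2⟩ <;> omega
    obtain ⟨z0, hcov, hz0y⟩ := spec_exists_cov ⟨hxy, hne⟩
    have hadj : (e.symm x).val + 1 = (e.symm z0).val ∨
        (e.symm z0).val + 1 = (e.symm x).val := by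
      refine (he (e.symm x) (e.symm z0)).mp ?_
      rw [Equiv.apply_symm_apply, Equiv.apply_symm_apply]
      exact Or.inl hcov
    by_cases hzk : e.symm z0 = k
    · exact ⟨z0, hcov.1.1, hz0y, hzk⟩
    · have hzk' : (e.symm z0).val ≠ k.val := fun h => hzk (Fin.ext h)
      have hcard' : Set.ncard {w | specLE z0 w ∧ specLE w y} ≤ m := by
        have hss : {w | specLE z0 w ∧ specLE w y} ⊂ {w | specLE x w ∧ specLE w y} := by
          rw [Set.ssubset_def]
          constructor
          · rintro w ⟨h1, h2⟩; exact ⟨specLE_trans hcov.1.1 h1, h2⟩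
          · intro hsub
            have hx := hsub ⟨specLE_refl x, hxy⟩
            exact hcov.1.2 (specLE_antisymm hcov.1.1 hx.1)
        have hlt := Set.ncard_lt_ncard hss (Set.toFinite _)
        omega
      rcases hk with ⟨h1, h2⟩ | ⟨h1, h2⟩
      · have hzlt : (e.symm z0).val < k.val := by omega
        obtain ⟨z, hza, hzb, hzc⟩ := ih z0 y hcard' hz0y k (Or.inl ⟨hzlt, h2⟩)
        exact ⟨z, specLE_trans hcov.1.1 hza, hzb, hzc⟩
      · have hzgt : k.val < (e.symm z0).val := by omega
        obtain ⟨z, hza, hzb, hzc⟩ := ih z0 y hcard' hz0y k (Or.inr ⟨h1, hzgt⟩)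
        exact ⟨z, specLE_trans hcov.1.1 hza, hzb, hzc⟩

lemma interval_pre {n : ℕ} [T0Space X] [Finite X] (e : Fin n ≃ X)
    (he : ∀ i j : Fin n,
      (specCov (e i) (e j) ∨ specCov (e j) (e i)) ↔ (i.val + 1 = j.val ∨ j.val + 1 = i.val)) :
    ∀ b a : ℕ, IsPreconnected (e '' {i : Fin n | a ≤ i.val ∧ i.val ≤ b}) := by
  intro b
  induction b with
  | zero =>
    intro a
    by_cases h : a = 0 ∧ 0 < n
    · obtain ⟨rfl, hn⟩ := h
      have hset : {i : Fin n | 0 ≤ i.val ∧ i.val ≤ 0} = {⟨0, hn⟩} := by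
        ext i
        simp only [Set.mem_setOf_eq, Set.mem_singleton_iff, Fin.ext_iff]
        omega
      rw [hset, Set.image_singleton]
      exact isPreconnected_singleton
    · have hset : {i : Fin n | a ≤ i.val ∧ i.val ≤ 0} = ∅ := by
        ext i
        simp only [Set.mem_setOf_eq, Set.mem_empty_iff_false, iff_false]
        rintro ⟨h1, h2⟩
        exact h ⟨by omega, i.pos⟩
      rw [hset, Set.image_empty]
      exact isPreconnected_empty
  | succ b ihb =>
    intro a
    by_cases hn : n ≤ b + 1
    · have hset : {i : Fin n | a ≤ i.val ∧ i.val ≤ b + 1} =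
          {i : Fin n | a ≤ i.val ∧ i.val ≤ b} := by
        ext i
        have := i.isLt
        simp only [Set.mem_setOf_eq]
        omega
      rw [hset]
      exact ihb a
    · push_neg at hn
      by_cases ha : a ≤ b
      · have hset : {i : Fin n | a ≤ i.val ∧ i.val ≤ b + 1} =
            insert ⟨b + 1, hn⟩ {i : Fin n | a ≤ i.val ∧ i.val ≤ b} := by
          ext i
          simp only [Set.mem_setOf_eq, Set.mem_insert_iff, Fin.ext_iff]
          omega
        rw [hset, Set.image_insert_eq]
        have hbmem : e ⟨b, by omega⟩ ∈ e '' {i : Fin n | a ≤ i.val ∧ i.val ≤ b} :=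
          Set.mem_image_of_mem e ⟨ha, le_refl b⟩
        refine pre_insert (ihb a) hbmem _ ?_
        have hcv := (he ⟨b, by omega⟩ ⟨b + 1, hn⟩).mpr (Or.inl rfl)
        rcases hcv with h | h
        · exact Or.inr h.1.1
        · exact Or.inl h.1.1
      · by_cases ha2 : a = b + 1
        · subst ha2
          have hset : {i : Fin n | b + 1 ≤ i.val ∧ i.val ≤ b + 1} = {⟨b + 1, hn⟩} := by
            ext i
            simp only [Set.mem_setOf_eq, Set.mem_singleton_iff, Fin.ext_iff]
            omega
          rw [hset, Set.image_singleton]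
          exact isPreconnected_singleton
        · have hset : {i : Fin n | a ≤ i.val ∧ i.val ≤ b + 1} = ∅ := by
            ext i
            simp only [Set.mem_setOf_eq, Set.mem_empty_iff_false, iff_false]
            rintro ⟨h1, h2⟩
            omega
          rw [hset, Set.image_empty]
          exact isPreconnected_empty

end Helpers

/-- In a finite T0-space with path-shaped Hasse diagram, the complement of a nonempty
connected locally closed subset has at most two connected components: it is the union of
two (possibly empty) preconnected subsets. -/
theorem stmt15 {X : Type*} [TopologicalSpace X] [Finite X] [T0Space X] (n : ℕ)
    (hpath : ∃ e : Fin n ≃ X, ∀ i j : Fin n,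
      (specCov (e i) (e j) ∨ specCov (e j) (e i)) ↔ (i.val + 1 = j.val ∨ j.val + 1 = i.val))
    (Y : Set X) (hY : IsConnected Y) (hYlc : IsLocallyClosed Y) :
    ∃ A B : Set X, IsPreconnected A ∧ IsPreconnected B ∧ Yᶜ = A ∪ B := by
  classical
  obtain ⟨e, he⟩ := hpath
  obtain ⟨U, Z, hU, hZ, hYUZ⟩ := hYlc
  set I : Set (Fin n) := {i | e i ∈ Y} with hIdef
  obtain ⟨y0, hy0⟩ := hY.nonempty
  have hIne : I.Nonempty := ⟨e.symm y0, by simp [hIdef, hy0]⟩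
  -- key: no specialisation between points of Y on opposite sides of a gap index
  have key : ∀ j : Fin n, j ∉ I → ∀ a ∈ Y, ∀ b ∈ Y, specLE a b →
      ¬(((e.symm a).val < j.val ∧ j.val < (e.symm b).val) ∨
        ((e.symm b).val < j.val ∧ j.val < (e.symm a).val)) := by
    intro j hj a ha b hb hab hor
    obtain ⟨z, hz1, hz2, hz3⟩ := pass e he _ a b le_rfl hab j hor
    have haU : a ∈ U := (hYUZ ▸ ha).1
    have hbZ : b ∈ Z := (hYUZ ▸ hb).2
    have hzU : z ∈ U := by
      obtain ⟨w, hw1, hw2⟩ := mem_closure_iff.mp hz1 U hU haU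
      rw [Set.mem_singleton_iff] at hw2
      exact hw2 ▸ hw1
    have hzZ : z ∈ Z := hZ.closure_eq ▸ closure_mono (Set.singleton_subset_iff.mpr hbZ) hz2
    have hzY : z ∈ Y := by rw [hYUZ]; exact ⟨hzU, hzZ⟩
    apply hj
    have hez : e j = z := by rw [← hz3, Equiv.apply_symm_apply]
    show e j ∈ Y
    rw [hez]
    exact hzY
  -- gap lemma: I has no interior gaps
  have gap : ∀ j : Fin n, j ∉ I → ∀ i1 ∈ I, ∀ i2 ∈ I, ¬(i1 < j ∧ j < i2) := by
    rintro j hj i1 hi1 i2 hi2 ⟨hj1, hj2⟩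
    set L : Set X := Y ∩ {x | (e.symm x).val < j.val} with hLdef
    set R : Set X := Y ∩ {x | j.val < (e.symm x).val} with hRdef
    have hi1L : e i1 ∈ L := ⟨hi1, by simpa using hj1⟩
    have hi2R : e i2 ∈ R := ⟨hi2, by simpa using hj2⟩
    have crossL : ∀ x ∈ Y, x ∈ closure R → (e.symm x).val < j.val → False := by
      intro x hx hcl hlt
      obtain ⟨y', hy'R, hxy'⟩ := mem_closure_fin hcl
      exact key j hj x hx y' hy'R.1 hxy' (Or.inl ⟨hlt, hy'R.2⟩)
    have crossR : ∀ x ∈ Y, x ∈ closure L → j.val < (e.symm x).val → False := by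
      intro x hx hcl hlt
      obtain ⟨y', hy'L, hxy'⟩ := mem_closure_fin hcl
      exact key j hj x hx y' hy'L.1 hxy' (Or.inr ⟨hy'L.2, hlt⟩)
    have hjx : ∀ x ∈ Y, (e.symm x).val ≠ j.val := by
      intro x hx hxx
      apply hj
      have : e j = x := by rw [← Fin.ext hxx, Equiv.apply_symm_apply]
      show e j ∈ Y
      rw [this]; exact hx
    have hsub : Y ⊆ (closure R)ᶜ ∪ (closure L)ᶜ := by
      intro x hx
      by_contra hcon
      simp only [Set.mem_union, Set.mem_compl_iff, not_or, not_not] at hcon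
      rcases lt_trichotomy (e.symm x).val j.val with h | h | h
      · exact crossL x hx hcon.1 h
      · exact hjx x hx h
      · exact crossR x hx hcon.2 h
    have hne1 : (Y ∩ (closure R)ᶜ).Nonempty := by
      refine ⟨e i1, hi1L.1, fun hc => ?_⟩
      exact crossL (e i1) hi1L.1 hc hi1L.2
    have hne2 : (Y ∩ (closure L)ᶜ).Nonempty := by
      refine ⟨e i2, hi2R.1, fun hc => ?_⟩
      exact crossR (e i2) hi2R.1 hc hi2R.2
    obtain ⟨x, hxY, hxu, hxv⟩ := hY.isPreconnected (closure R)ᶜ (closure L)ᶜ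
      isClosed_closure.isOpen_compl isClosed_closure.isOpen_compl hsub hne1 hne2
    rcases lt_trichotomy (e.symm x).val j.val with h | h | h
    · exact hxv (subset_closure ⟨hxY, h⟩)
    · exact hjx x hxY h
    · exact hxu (subset_closure ⟨hxY, h⟩)
  -- min and max of I
  have hfin := I.toFinite
  have hFne : hfin.toFinset.Nonempty := hfin.toFinset_nonempty.mpr hIne
  set a0 := hfin.toFinset.min' hFne with ha0def
  set b0 := hfin.toFinset.max' hFne with hb0def
  have ha0I : a0 ∈ I := hfin.mem_toFinset.mp (hfin.toFinset.min'_mem hFne)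
  have hb0I : b0 ∈ I := hfin.mem_toFinset.mp (hfin.toFinset.max'_mem hFne)
  have ha0min : ∀ i ∈ I, a0 ≤ i := fun i hi => hfin.toFinset.min'_le i (hfin.mem_toFinset.mpr hi)
  have hb0max : ∀ i ∈ I, i ≤ b0 := fun i hi => hfin.toFinset.le_max' i (hfin.mem_toFinset.mpr hi)
  refine ⟨e '' {i : Fin n | i.val < a0.val}, e '' {i : Fin n | b0.val < i.val}, ?_, ?_, ?_⟩
  · by_cases h0 : a0.val = 0
    · have hset : {i : Fin n | i.val < a0.val} = ∅ := by
        ext i; simp only [Set.mem_setOf_eq, Set.mem_empty_iff_false, iff_false]; omega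
      rw [hset, Set.image_empty]
      exact isPreconnected_empty
    · have hset : {i : Fin n | i.val < a0.val} =
          {i : Fin n | 0 ≤ i.val ∧ i.val ≤ a0.val - 1} := by
        ext i; simp only [Set.mem_setOf_eq]; omega
      rw [hset]
      exact interval_pre e he (a0.val - 1) 0
  · have hset : {i : Fin n | b0.val < i.val} =
        {i : Fin n | b0.val + 1 ≤ i.val ∧ i.val ≤ n} := by
      ext i; have := i.isLt; simp only [Set.mem_setOf_eq]; omega
    rw [hset]
    exact interval_pre e he n (b0.val + 1)
  · ext x
    simp only [Set.mem_compl_iff, Set.mem_union]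
    constructor
    · intro hx
      have hjI : e.symm x ∉ I := by
        show e (e.symm x) ∉ Y
        rwa [Equiv.apply_symm_apply]
      have hne1 : e.symm x ≠ a0 := fun h => hjI (h ▸ ha0I)
      have hne2 : e.symm x ≠ b0 := fun h => hjI (h ▸ hb0I)
      have hnotmid : ¬(a0 < e.symm x ∧ e.symm x < b0) := gap _ hjI a0 ha0I b0 hb0I
      have : (e.symm x).val < a0.val ∨ b0.val < (e.symm x).val := by
        rcases lt_or_ge (e.symm x).val a0.val with h | h
        · exact Or.inl h
        · rcases lt_or_ge b0.val (e.symm x).val with h' | h'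
          · exact Or.inr h'
          · exfalso
            apply hnotmid
            constructor
            · rw [Fin.lt_def]
              rcases Nat.lt_or_ge a0.val (e.symm x).val with hh | hh
              · exact hh
              · exact absurd (Fin.ext (le_antisymm hh h)) hne1
            · rw [Fin.lt_def]
              rcases Nat.lt_or_ge (e.symm x).val b0.val with hh | hh
              · exact hh
              · exact absurd (Fin.ext (le_antisymm h' hh)) hne2
      rcases this with h | h
      · exact Or.inl ⟨e.symm x, h, Equiv.apply_symm_apply e x⟩
      · exact Or.inr ⟨e.symm x, h, Equiv.apply_symm_apply e x⟩
    · rintro (⟨i, hi, rfl⟩ | ⟨i, hi, rfl⟩) hmem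
      · have hle : a0 ≤ i := ha0min i hmem
        rw [Fin.le_def] at hle
        simp only [Set.mem_setOf_eq] at hi
        omega
      · have hle : i ≤ b0 := hb0max i hmem
        rw [Fin.le_def] at hle
        simp only [Set.mem_setOf_eq] at hi
        omega
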